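/- Let G = (X, E, δ, X₀) be an NFA with observable events E_o, secret states X_S, observer G_obs and secret-involved projected automaton G_SP, and fix K ≥ 0. Let G_st be the SST rooted at an observer state q ∈ X_obs with q ∩ X_S ≠ ∅, with root x_st,0 = (x_st,0¹, x_st,0²), and let p = x_st,0 x_st,1 ⋯ x_st,n (0 ≤ n ≤ K) be a path in G_st whose corresponding sequence of observations is e_{o,1} e_{o,2} ⋯ e_{o,n}. If x_st,i² ≠ ∅ for all 0 ≤ i ≤ n, then for every 0 ≤ i ≤ n and every x_i ∈ x_st,i² there exist x₀ ∈ X_NS ∩ x_st,0² and a string s = s₁s₂⋯s_i ∈ E* with P(s_j) = e_{o,j} for all 1 ≤ j ≤ i such that there is a non-secret run of G from x₀ to x_i over s. -/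

import Mathlib

namespace Opacity

variable {X E : Type*}

/-- Extension of a nondeterministic transition function `δ : X × E → Set X`
to strings: `dStr δ x ε = {x}` and `dStr δ x (e·s) = ⋃ x' ∈ δ x e, dStr δ x' s`. -/
def dStr (δ : X → E → Set X) : X → List E → Set X
  | x, [] => {x}
  | x, e :: s => ⋃ x' ∈ δ x e, dStr δ x' s

/-- Extension of the transition function to sets of states. -/
def dSet (δ : X → E → Set X) (Q : Set X) (s : List E) : Set X :=
  ⋃ x ∈ Q, dStr δ x s

/-- The natural projection `P : E* → E_o*`, deleting all unobservable events. -/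
noncomputable def proj (Eo : Set E) : List E → List E
  | [] => []
  | e :: s => @ite _ (e ∈ Eo) (Classical.propDecidable _) (e :: proj Eo s) (proj Eo s)

/-- Unobservable reach `UR(Q)`. -/
def UR (δ : X → E → Set X) (Eo : Set E) (Q : Set X) : Set X :=
  {x' | ∃ x ∈ Q, ∃ s : List E, x' ∈ dStr δ x s ∧ proj Eo s = []}

/-- Observable reach `R(Q, e_o)` via one observable event. -/
def oR (δ : X → E → Set X) (Eo : Set E) (Q : Set X) (eo : E) : Set X :=
  {x | ∃ x' ∈ Q, ∃ s : List E, x ∈ dStr δ x' s ∧ proj Eo s = [eo]}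

/-- The observer's transition function `f_obs(q, e_o) = R(q, e_o)`, extended to
observation sequences.  It is totalized: since `R(∅, e_o) = ∅`, the partial
function `f_obs` is defined on `(q, w)` exactly when `fobs δ Eo q w` is nonempty. -/
def fobs (δ : X → E → Set X) (Eo : Set E) : Set X → List E → Set X
  | q, [] => q
  | q, e :: w => fobs δ Eo (oR δ Eo q e) w

/-- The state set `X_obs` of the observer: the (nonempty) subsets of `X`
reachable from the initial observer state `UR(X₀)`. -/
def Xobs (δ : X → E → Set X) (Eo : Set E) (X0 : Set X) : Set (Set X) :=
  {q | ∃ w : List E, fobs δ Eo (UR δ Eo X0) w = q ∧ q.Nonempty}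

/-- `y` is a run of the automaton from `x` over the string `s`:
`y 0 = x` and `y (j+1) ∈ δ (y j) (s[j])` for all `j < |s|`. -/
def IsRun (δ : X → E → Set X) (x : X) (s : List E) (y : ℕ → X) : Prop :=
  y 0 = x ∧ ∀ j : Fin s.length, y (j.val + 1) ∈ δ (y j.val) (s.get j)

/-- There is a non-secret run of the automaton from `x` to `x'` over `s`
(all states of the run except possibly the first one are non-secret). -/
def NonSecretRunTo (δ : X → E → Set X) (XS : Set X) (x : X) (s : List E) (x' : X) : Prop :=
  ∃ y : ℕ → X, IsRun δ x s y ∧ (∀ j, 1 ≤ j → j ≤ s.length → y j ∉ XS) ∧ y s.length = x'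

/-- `K`-step weak opacity. -/
def KStepWeakOpaque (δ : X → E → Set X) (Eo : Set E) (X0 XS : Set X) (K : ℕ) : Prop :=
  ∀ x0 ∈ X0, ∀ s t : List E,
    (dStr δ x0 (s ++ t)).Nonempty →
    (dStr δ x0 s ∩ XS).Nonempty →
    (dSet δ (dStr δ x0 s ∩ XS) t).Nonempty →
    (proj Eo t).length ≤ K →
    ∃ x0' ∈ X0, ∃ s' t' : List E,
      (dStr δ x0' (s' ++ t')).Nonempty ∧
      proj Eo s' = proj Eo s ∧ proj Eo t' = proj Eo t ∧
      (dStr δ x0' s' ∩ XSᶜ).Nonempty ∧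
      (dSet δ (dStr δ x0' s' ∩ XSᶜ) t').Nonempty

/-- Infinite-step weak opacity. -/
def InfStepWeakOpaque (δ : X → E → Set X) (Eo : Set E) (X0 XS : Set X) : Prop :=
  ∀ x0 ∈ X0, ∀ s t : List E,
    (dStr δ x0 (s ++ t)).Nonempty →
    (dStr δ x0 s ∩ XS).Nonempty →
    (dSet δ (dStr δ x0 s ∩ XS) t).Nonempty →
    ∃ x0' ∈ X0, ∃ s' t' : List E,
      (dStr δ x0' (s' ++ t')).Nonempty ∧
      proj Eo s' = proj Eo s ∧ proj Eo t' = proj Eo t ∧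
      (dStr δ x0' s' ∩ XSᶜ).Nonempty ∧
      (dSet δ (dStr δ x0' s' ∩ XSᶜ) t').Nonempty

/-- `K`-step strong opacity. -/
def KStepStrongOpaque (δ : X → E → Set X) (Eo : Set E) (X0 XS : Set X) (K : ℕ) : Prop :=
  ∀ x0 ∈ X0, ∀ s t : List E,
    (dStr δ x0 (s ++ t)).Nonempty →
    (dStr δ x0 s ∩ XS).Nonempty →
    (dSet δ (dStr δ x0 s ∩ XS) t).Nonempty →
    (proj Eo t).length ≤ K →
    ∃ x0' ∈ X0, ∃ ω : List E,
      (dStr δ x0' ω).Nonempty ∧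
      proj Eo ω = proj Eo (s ++ t) ∧
      ∃ y : ℕ → X, IsRun δ x0' ω y ∧
        ∀ j ≤ ω.length,
          (proj Eo ω).length - (proj Eo (ω.take j)).length ≤ K → y j ∉ XS

/-- Infinite-step strong opacity. -/
def InfStepStrongOpaque (δ : X → E → Set X) (Eo : Set E) (X0 XS : Set X) : Prop :=
  ∀ x0 ∈ X0, ∀ s t : List E,
    (dStr δ x0 (s ++ t)).Nonempty →
    (dStr δ x0 s ∩ XS).Nonempty →
    (dSet δ (dStr δ x0 s ∩ XS) t).Nonempty →
    ∃ x0' ∈ X0 ∩ XSᶜ, ∃ ω : List E,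
      (dStr δ x0' ω).Nonempty ∧
      proj Eo ω = proj Eo (s ++ t) ∧
      ∃ y : ℕ → X, IsRun δ x0' ω y ∧ ∀ j ≤ ω.length, y j ∉ XS

/-- Child of a node `(x₁, x₂)` of a state-tree associated with observer state `q'`,
via observable event `e`. -/
def treeChild (δ : X → E → Set X) (Eo : Set E) (q' : Set X) (n : Set X × Set X)
    (e : E) : Set X × Set X :=
  ({x ∈ oR δ Eo q' e | ∃ x' ∈ n.1, x ∈ oR δ Eo {x'} e},
   {x ∈ oR δ Eo q' e | ∃ x' ∈ n.2, x ∈ oR δ Eo {x'} e})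

/-- Descend in a state-tree from node `n` (associated with observer state `q'`)
along the observation sequence `w`. -/
def treeNodeAux (δ : X → E → Set X) (Eo : Set E) :
    Set X → Set X × Set X → List E → Set X × Set X
  | _, n, [] => n
  | q', n, e :: w => treeNodeAux δ Eo (oR δ Eo q' e) (treeChild δ Eo q' n e) w

/-- The node of the state-tree rooted at observer state `q` reached from the
root `(q ∩ X_S, q ∩ X_NS)` along the observation sequence `w`. -/
def treeNode (δ : X → E → Set X) (Eo : Set E) (XS : Set X) (q : Set X)
    (w : List E) : Set X × Set X :=
  treeNodeAux δ Eo q (q ∩ XS, q ∩ XSᶜ) w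

/-- `X_st`: all nodes of the depth-`K` state-trees rooted at observer states
intersecting the secret states. -/
def Xst (δ : X → E → Set X) (Eo : Set E) (X0 XS : Set X) (K : ℕ) :
    Set (Set X × Set X) :=
  {n | ∃ q ∈ Xobs δ Eo X0, (q ∩ XS).Nonempty ∧
    ∃ w : List E, w.length ≤ K ∧ (fobs δ Eo q w).Nonempty ∧ treeNode δ Eo XS q w = n}

/-- Initial states of the secret-involved projected automaton.  A state of
`G_SP` is a pair `(x, b)` where `b = false` encodes the tag `N` and `b = true`
encodes the tag `Y`. -/
def SPinit (δ : X → E → Set X) (Eo : Set E) (X0 XS : Set X) : Set (X × Bool) :=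
  {p | p.1 ∈ UR δ Eo X0 ∧
    (p.2 = false ↔
      ∃ x0 ∈ X0 ∩ XSᶜ, ∃ s : List E, proj Eo s = [] ∧ NonSecretRunTo δ XS x0 s p.1)}

/-- Transition relation of the secret-involved projected automaton. -/
def SPtrans (δ : X → E → Set X) (Eo : Set E) (XS : Set X) (p : X × Bool) (e : E) :
    Set (X × Bool) :=
  {p' | p'.1 ∈ oR δ Eo {p.1} e ∧
    ((p.1 ∉ XS ∧
        (p'.2 = false ↔ ∃ s : List E, proj Eo s = [e] ∧ NonSecretRunTo δ XS p.1 s p'.1)) ∨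
     (p.1 ∈ XS ∧ p.2 = true ∧ p'.2 = true))}

/-- `X_SP`: states of the secret-involved projected automaton reachable from
its initial states. -/
def XSP (δ : X → E → Set X) (Eo : Set E) (X0 XS : Set X) : Set (X × Bool) :=
  {p | ∃ p0 ∈ SPinit δ Eo X0 XS, ∃ w : List E, p ∈ dStr (SPtrans δ Eo XS) p0 w}

/-- Child of a node `(x₁, x₂)` of a secret-unvisited state-tree associated with
observer state `q'`, via observable event `e`. -/
def sstChild (δ : X → E → Set X) (Eo : Set E) (XS : Set X) (q' : Set X)
    (n : Set X × Set X) (e : E) : Set X × Set X :=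
  (oR δ Eo q' e,
   {x ∈ oR δ Eo q' e | ∃ x' ∈ n.2,
      x ∈ oR δ Eo {x'} e ∧ (x, false) ∈ SPtrans δ Eo XS (x', false) e})

/-- Descend in a secret-unvisited state-tree from node `n` (associated with
observer state `q'`) along the observation sequence `w`. -/
def sstNodeAux (δ : X → E → Set X) (Eo : Set E) (XS : Set X) :
    Set X → Set X × Set X → List E → Set X × Set X
  | _, n, [] => n
  | q', n, e :: w => sstNodeAux δ Eo XS (oR δ Eo q' e) (sstChild δ Eo XS q' n e) w

/-- The node of the secret-unvisited state-tree (SST) rooted at observer state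
`q` reached from the root `(q, {x ∈ q ∩ X_NS : x_N ∈ X_SP})` along the
observation sequence `w`. -/
def sstNode (δ : X → E → Set X) (Eo : Set E) (X0 XS : Set X) (q : Set X)
    (w : List E) : Set X × Set X :=
  sstNodeAux δ Eo XS q
    (q, {x | x ∈ q ∧ x ∉ XS ∧ (x, false) ∈ XSP δ Eo X0 XS}) w

/-- `X_st^G`: all nodes of the depth-`K` SSTs rooted at observer states
intersecting the secret states. -/
def XstSST (δ : X → E → Set X) (Eo : Set E) (X0 XS : Set X) (K : ℕ) :
    Set (Set X × Set X) :=
  {n | ∃ q ∈ Xobs δ Eo X0, (q ∩ XS).Nonempty ∧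
    ∃ w : List E, w.length ≤ K ∧ (fobs δ Eo q w).Nonempty ∧ sstNode δ Eo X0 XS q w = n}

/-- Initial state of the verifier. -/
def vInit (δ : X → E → Set X) (Eo : Set E) (X0 XS : Set X) : Set X × Set X :=
  (UR δ Eo X0, {x ∈ UR δ Eo X0 | (x, false) ∈ SPinit δ Eo X0 XS})

/-- Transition function of the verifier, extended to observation sequences
(totalized: the verifier step is defined exactly when the corresponding
observer step is, i.e. exactly when the first component stays nonempty). -/
def fv (δ : X → E → Set X) (Eo : Set E) (XS : Set X) :
    Set X × Set X → List E → Set X × Set X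
  | v, [] => v
  | v, e :: w => fv δ Eo XS
      (oR δ Eo v.1 e,
       {x' ∈ oR δ Eo v.1 e | ∃ x ∈ v.2, (x', false) ∈ SPtrans δ Eo XS (x, false) e}) w

/-- `X_v`: the verifier states reachable from the initial verifier state. -/
def Xv (δ : X → E → Set X) (Eo : Set E) (X0 XS : Set X) : Set (Set X × Set X) :=
  {v | ∃ w : List E, fv δ Eo XS (vInit δ Eo X0 XS) w = v ∧ v.1.Nonempty}

end Opacity


namespace Opacity

lemma proj_append (Eo : Set E) (s t : List E) :
    proj Eo (s ++ t) = proj Eo s ++ proj Eo t := by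
  induction s with
  | nil => rfl
  | cons e s ih =>
    simp only [List.cons_append, proj, ih]
    split <;> simp [ih]

lemma nonSecretRunTo_trans (δ : X → E → Set X) (XS : Set X)
    {x x' x'' : X} {s t : List E}
    (h1 : NonSecretRunTo δ XS x s x') (h2 : NonSecretRunTo δ XS x' t x'') :
    NonSecretRunTo δ XS x (s ++ t) x'' := by
  obtain ⟨y, ⟨hy0, hyStep⟩, hyNS, hyEnd⟩ := h1
  obtain ⟨z, ⟨hz0, hzStep⟩, hzNS, hzEnd⟩ := h2
  refine ⟨fun j => if j < s.length then y j else z (j - s.length), ⟨?_, ?_⟩, ?_, ?_⟩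
  · by_cases h : 0 < s.length
    · simpa [h] using hy0
    · have hs : s.length = 0 := by omega
      simp only [h, if_false, hs, Nat.sub_zero]
      rw [hz0, ← hyEnd, hs, hy0]
      simp
  · intro j
    have hjlen : j.val < s.length + t.length := by
      have := j.isLt; simpa [List.length_append] using this
    by_cases h : j.val < s.length
    · have hget : (s ++ t).get j = s.get ⟨j.val, h⟩ := by
        simp only [List.get_eq_getElem]
        exact List.getElem_append_left h
      have hy := hyStep ⟨j.val, h⟩
      rw [hget]
      simp only [h, if_pos]
      by_cases h1 : j.val + 1 < s.length
      · simpa [h1] using hy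
      · have he : j.val + 1 = s.length := by omega
        have hzy : z (j.val + 1 - s.length) = y (j.val + 1) := by
          rw [he]; simp [hz0, ← hyEnd]
        simp only [h1, if_false, hzy]
        exact hy
    · have h' : s.length ≤ j.val := by omega
      have ht : j.val - s.length < t.length := by omega
      have hget : (s ++ t).get j = t.get ⟨j.val - s.length, ht⟩ := by
        simp only [List.get_eq_getElem]
        exact List.getElem_append_right h'
      have h1 : ¬ j.val + 1 < s.length := by omega
      have hz := hzStep ⟨j.val - s.length, ht⟩
      have he : j.val + 1 - s.length = (j.val - s.length) + 1 := by omega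
      rw [hget]
      simp only [h, h1, if_false, he]
      exact hz
  · intro j hj1 hj2
    by_cases h : j < s.length
    · simp only [h, if_pos]
      exact hyNS j hj1 (le_of_lt h)
    · simp only [h, if_false]
      by_cases h0 : j = s.length
      · have : z (j - s.length) = y s.length := by
          rw [h0]; simp [hz0, ← hyEnd]
        rw [this]
        exact hyNS s.length (by omega) le_rfl
      · refine hzNS (j - s.length) (by omega) ?_
        simp [List.length_append] at hj2; omega
  · have h : ¬ s.length + t.length < s.length := by omega
    simp only [List.length_append, h, if_false]
    simpa using hzEnd

lemma sstNodeAux_append (δ : X → E → Set X) (Eo : Set E) (XS : Set X)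
    (u v : List E) : ∀ (q' : Set X) (n : Set X × Set X),
    sstNodeAux δ Eo XS q' n (u ++ v) =
      sstNodeAux δ Eo XS (fobs δ Eo q' u) (sstNodeAux δ Eo XS q' n u) v := by
  induction u with
  | nil => intro q' n; rfl
  | cons e u ih => intro q' n; simp [sstNodeAux, fobs, ih]

lemma sstNode_append (δ : X → E → Set X) (Eo : Set E) (X0 XS : Set X)
    (q : Set X) (u : List E) (e : E) :
    sstNode δ Eo X0 XS q (u ++ [e]) =
      sstChild δ Eo XS (fobs δ Eo q u) (sstNode δ Eo X0 XS q u) e := by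
  unfold sstNode
  rw [sstNodeAux_append]
  rfl

end Opacity

open Opacity

/-- Along a path `x_st,0 ⋯ x_st,n` (with `n ≤ K`) of an SST rooted at
an observer state `q` with `q ∩ X_S ≠ ∅`, if all second components are nonempty, then
every state in every second component is reached from some non-secret state of the
root's second component by a non-secret run whose projection is the corresponding
observation sequence. -/
theorem sst_second_component_nonsecret_runs
    {X E : Type*} [Finite X] [Finite E]
    (δ : X → E → Set X) (Eo : Set E) (X0 XS : Set X) (K : ℕ)
    (q : Set X) (hq : q ∈ Xobs δ Eo X0) (hqS : (q ∩ XS).Nonempty)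
    (w : List E) (hwK : w.length ≤ K) (hdef : (fobs δ Eo q w).Nonempty)
    (hne : ∀ i ≤ w.length, (sstNode δ Eo X0 XS q (w.take i)).2 ≠ ∅) :
    ∀ i ≤ w.length, ∀ x ∈ (sstNode δ Eo X0 XS q (w.take i)).2,
      ∃ x0 ∈ XSᶜ ∩ (sstNode δ Eo X0 XS q ([] : List E)).2,
        ∃ s : List E, proj Eo s = w.take i ∧ NonSecretRunTo δ XS x0 s x := by
  intro i
  induction i with
  | zero =>
    intro _ x hx
    simp only [List.take_zero] at *
    have hxq : x ∉ XS := hx.2.1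
    exact ⟨x, ⟨hxq, hx⟩, [], rfl,
      fun _ => x, ⟨rfl, fun j => absurd j.isLt (by simp)⟩,
      fun j hj1 hj2 => by simp at hj2; omega, rfl⟩
  | succ n ih =>
    intro hi x hx
    have hn : n < w.length := hi
    have htake : w.take (n + 1) = w.take n ++ [w.get ⟨n, hn⟩] := by
      rw [← List.take_concat_get hn, List.concat_eq_append]
      rfl
    rw [htake] at hx ⊢
    rw [sstNode_append] at hx
    obtain ⟨-, x', hx'mem, -, hsp⟩ := hx
    obtain ⟨-, hdisj⟩ := hsp
    rcases hdisj with ⟨hxns, hiff⟩ | ⟨-, -, hfalse⟩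
    · obtain ⟨s', hs'proj, hs'run⟩ := hiff.mp rfl
      obtain ⟨x0, hx0, s, hsproj, hsrun⟩ := ih (le_of_lt hn) x' hx'mem
      exact ⟨x0, hx0, s ++ s', by rw [proj_append, hsproj, hs'proj],
        nonSecretRunTo_trans δ XS hsrun hs'run⟩
    · exact absurd hfalse (by simp)
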